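/- There exists a constant C > 0 such that for every λ > 0 and every matrix F ∈ ℝ^{2×2} with det F ≥ 0, one has dist²(F, λ·SO(2)) ≤ C · W_λ(F). -/

import Mathlib

open Matrix

/-- Euclidean norm on `ℝ²`. -/
noncomputable def vnorm (v : Fin 2 → ℝ) : ℝ := Real.sqrt (v 0 ^ 2 + v 1 ^ 2)

/-- The three unit bond directions of the equilateral triangular lattice. -/
noncomputable def ebond : Fin 3 → (Fin 2 → ℝ) :=
  ![![1, 0], ![1 / 2, Real.sqrt 3 / 2], ![-(1 / 2), Real.sqrt 3 / 2]]

/-- The cell energy density `W_λ`. -/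
noncomputable def Wcell (l : ℝ) (F : Matrix (Fin 2) (Fin 2) ℝ) : ℝ :=
  (vnorm (F.mulVec (ebond 0)) - l) ^ 2 + (vnorm (F.mulVec (ebond 1)) - l) ^ 2 +
    (vnorm (F.mulVec (ebond 2)) - l) ^ 2

/-- `SO(2)`: real orthogonal `2 × 2` matrices with determinant one. -/
def SO2 : Set (Matrix (Fin 2) (Fin 2) ℝ) :=
  {R | R.transpose * R = 1 ∧ R.det = 1}

/-- Frobenius norm of a `2 × 2` real matrix. -/
noncomputable def frob (A : Matrix (Fin 2) (Fin 2) ℝ) : ℝ :=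
  Real.sqrt (∑ i : Fin 2, ∑ j : Fin 2, (A i j) ^ 2)

/-- Distance (w.r.t. the Frobenius norm) from a matrix to a set of matrices. -/
noncomputable def distToSet (F : Matrix (Fin 2) (Fin 2) ℝ)
    (S : Set (Matrix (Fin 2) (Fin 2) ℝ)) : ℝ :=
  sInf ((fun G => frob (F - G)) '' S)

/-- There exists `C > 0` such that for every `λ > 0` and every `F ∈ ℝ^{2×2}` with
`det F ≥ 0`, `dist²(F, λ·SO(2)) ≤ C · W_λ(F)`. -/

lemma aux_pair (x y t l : ℝ) (hx : 0 ≤ x) (hy : 0 ≤ y) (hxt : x ≤ t) (hyt : y ≤ t) :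
    (x^2 - y^2)^2 ≤ (2*(x-l)^2 + 2*(y-l)^2) * (4*t^2) := by
  have c1 : (x-y)^2 ≤ 2*(x-l)^2 + 2*(y-l)^2 := by nlinarith [sq_nonneg (x+y-2*l)]
  have c2 : (x+y)^2 ≤ 4*t^2 := by nlinarith
  calc (x^2-y^2)^2 = (x-y)^2 * (x+y)^2 := by ring
    _ ≤ (2*(x-l)^2 + 2*(y-l)^2) * (4*t^2) :=
        mul_le_mul c1 c2 (sq_nonneg _) (by positivity)

lemma aux_hS2 (a1 a2 a3 l : ℝ) (h1 : 0 ≤ a1) (h2 : 0 ≤ a2) (h3 : 0 ≤ a3)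
    (g1 : a1 ≤ 3*l) (g2 : a2 ≤ 3*l) (g3 : a3 ≤ 3*l) :
    (2/3 * (a1^2+a2^2+a3^2) - 2*l^2)^2 ≤
      22 * l^2 * ((a1-l)^2 + (a2-l)^2 + (a3-l)^2) := by
  nlinarith [sq_nonneg ((a1^2-l^2)-(a2^2-l^2)), sq_nonneg ((a1^2-l^2)-(a3^2-l^2)),
    sq_nonneg ((a2^2-l^2)-(a3^2-l^2)),
    mul_nonneg (sq_nonneg (a1-l)) (mul_nonneg (sub_nonneg.2 g1) (by linarith : (0:ℝ) ≤ 5*l + a1)),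
    mul_nonneg (sq_nonneg (a2-l)) (mul_nonneg (sub_nonneg.2 g2) (by linarith : (0:ℝ) ≤ 5*l + a2)),
    mul_nonneg (sq_nonneg (a3-l)) (mul_nonneg (sub_nonneg.2 g3) (by linarith : (0:ℝ) ≤ 5*l + a3))]

/-- bound on products of betas -/
lemma aux_prod (l x y bx by' : ℝ) (hx : 0 ≤ x) (hy : 0 ≤ y) (hx2 : x ≤ 2*l) (hy2 : y ≤ 2*l)
    (hbx1 : -(4*l*x) ≤ bx) (hbx2 : bx ≤ 4*l*x) (hby1 : -(4*l*y) ≤ by') (hby2 : by' ≤ 4*l*y) :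
    bx * by' ≤ 16*l^2*x*y ∧ -(16*l^2*x*y) ≤ bx*by' := by
  constructor
  · nlinarith [mul_nonneg (by linarith : 0 ≤ 4*l*x - bx) (by linarith : 0 ≤ 4*l*y + by'),
      mul_nonneg (by linarith : 0 ≤ 4*l*x + bx) (by linarith : 0 ≤ 4*l*y - by')]
  · nlinarith [mul_nonneg (by linarith : 0 ≤ 4*l*x - bx) (by linarith : 0 ≤ 4*l*y - by'),
      mul_nonneg (by linarith : 0 ≤ 4*l*x + bx) (by linarith : 0 ≤ 4*l*y + by')]

lemma aux_sq (l w b : ℝ) (h1 : -(4*l*w) ≤ b) (h2 : b ≤ 4*l*w) : b^2 ≤ 16*l^2*w^2 := by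
  nlinarith [mul_nonneg (by linarith : 0 ≤ 4*l*w - b) (by linarith : 0 ≤ 4*l*w + b)]

/-- the E-bound, abstracted in the betas -/
lemma aux_E (l b1 b2 b3 w1 w2 w3 : ℝ) (hl : 0 < l)
    (hw1n : 0 ≤ w1) (hw2n : 0 ≤ w2) (hw3n : 0 ≤ w3)
    (hw1b : w1 ≤ 2*l) (hw2b : w2 ≤ 2*l) (hw3b : w3 ≤ 2*l)
    (h1l : -(4*l*w1) ≤ b1) (h1u : b1 ≤ 4*l*w1)
    (h2l : -(4*l*w2) ≤ b2) (h2u : b2 ≤ 4*l*w2)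
    (h3l : -(4*l*w3) ≤ b3) (h3u : b3 ≤ 4*l*w3) :
    |2*(b1*b2 + b1*b3 + b2*b3) - (b1^2 + b2^2 + b3^2) + 2*l^2*(b1 + b2 + b3)|
      ≤ 200*l^3*(w1+w2+w3) := by
  obtain ⟨p12u, p12l⟩ := aux_prod l w1 w2 b1 b2 hw1n hw2n hw1b hw2b h1l h1u h2l h2u
  obtain ⟨p13u, p13l⟩ := aux_prod l w1 w3 b1 b3 hw1n hw3n hw1b hw3b h1l h1u h3l h3u
  obtain ⟨p23u, p23l⟩ := aux_prod l w2 w3 b2 b3 hw2n hw3n hw2b hw3b h2l h2u h3l h3u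
  have hsq1 := aux_sq l w1 b1 h1l h1u
  have hsq2 := aux_sq l w2 b2 h2l h2u
  have hsq3 := aux_sq l w3 b3 h3l h3u
  have hl2 : (0:ℝ) ≤ l^2 := sq_nonneg l
  have hwp12 : l^2*(w1*w2) ≤ l^2*(2*l*w2) :=
    mul_le_mul_of_nonneg_left (mul_le_mul_of_nonneg_right hw1b hw2n) hl2
  have hwp13 : l^2*(w1*w3) ≤ l^2*(2*l*w3) :=
    mul_le_mul_of_nonneg_left (mul_le_mul_of_nonneg_right hw1b hw3n) hl2
  have hwp23 : l^2*(w2*w3) ≤ l^2*(2*l*w3) :=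
    mul_le_mul_of_nonneg_left (mul_le_mul_of_nonneg_right hw2b hw3n) hl2
  have hws1 : l^2*(w1*w1) ≤ l^2*(2*l*w1) :=
    mul_le_mul_of_nonneg_left (mul_le_mul_of_nonneg_right hw1b hw1n) hl2
  have hws2 : l^2*(w2*w2) ≤ l^2*(2*l*w2) :=
    mul_le_mul_of_nonneg_left (mul_le_mul_of_nonneg_right hw2b hw2n) hl2
  have hws3 : l^2*(w3*w3) ≤ l^2*(2*l*w3) :=
    mul_le_mul_of_nonneg_left (mul_le_mul_of_nonneg_right hw3b hw3n) hl2
  have hlb1 : l^2*b1 ≤ l^2*(4*l*w1) := mul_le_mul_of_nonneg_left h1u hl2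
  have hlb2 : l^2*b2 ≤ l^2*(4*l*w2) := mul_le_mul_of_nonneg_left h2u hl2
  have hlb3 : l^2*b3 ≤ l^2*(4*l*w3) := mul_le_mul_of_nonneg_left h3u hl2
  have hlb1' : l^2*(-(4*l*w1)) ≤ l^2*b1 := mul_le_mul_of_nonneg_left h1l hl2
  have hlb2' : l^2*(-(4*l*w2)) ≤ l^2*b2 := mul_le_mul_of_nonneg_left h2l hl2
  have hlb3' : l^2*(-(4*l*w3)) ≤ l^2*b3 := mul_le_mul_of_nonneg_left h3l hl2
  have hn1 : 0 ≤ l^3*w1 := mul_nonneg (by positivity) hw1n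
  have hn2 : 0 ≤ l^3*w2 := mul_nonneg (by positivity) hw2n
  have hn3 : 0 ≤ l^3*w3 := mul_nonneg (by positivity) hw3n
  rw [abs_le]
  constructor
  · linarith [p12l, p13l, p23l, hsq1, hsq2, hsq3, hws1, hws2, hws3, hlb1', hlb2', hlb3', hn1, hn2, hn3]
  · linarith [p12u, p13u, p23u, sq_nonneg b1, sq_nonneg b2, sq_nonneg b3,
      hwp12, hwp13, hwp23, hlb1, hlb2, hlb3, hn1, hn2, hn3]

lemma aux_largeT (a1 a2 a3 t l : ℝ) (h1 : 0 ≤ a1) (h2 : 0 ≤ a2) (h3 : 0 ≤ a3)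
    (hl : 0 < l) (hcase : 3*l ≤ t)
    (hb1 : a1^2 ≤ t^2) (hb2 : a2^2 ≤ t^2) (hb3 : a3^2 ≤ t^2)
    (hsum : 3/4*t^2 ≤ a1^2 + a2^2 + a3^2) :
    (t - 2*l)^2 ≤ 500000 * ((a1-l)^2 + (a2-l)^2 + (a3-l)^2) := by
  have ht : 0 ≤ t := by linarith
  have hmax : t/2 ≤ a1 ∨ t/2 ≤ a2 ∨ t/2 ≤ a3 := by
    by_contra hcon
    push_neg at hcon
    obtain ⟨c1, c2, c3⟩ := hcon
    nlinarith [mul_le_mul c1.le c1.le h1 (by linarith : (0:ℝ) ≤ t/2), mul_le_mul c2.le c2.le h2 (by linarith : (0:ℝ) ≤ t/2),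
      mul_le_mul c3.le c3.le h3 (by linarith : (0:ℝ) ≤ t/2)]
  have haux : ∀ a : ℝ, t/2 ≤ a → (t-2*l)^2 ≤ 500000 * (a-l)^2 := by
    intro a ha
    have h6 : 0 ≤ 6*(a-l) - t := by linarith
    have h6' : 0 ≤ 6*(a-l) + t := by linarith
    nlinarith [mul_nonneg h6 h6', hl.le, hcase]
  rcases hmax with h | h | h
  · nlinarith [haux a1 h, sq_nonneg (a2-l), sq_nonneg (a3-l)]
  · nlinarith [haux a2 h, sq_nonneg (a1-l), sq_nonneg (a3-l)]
  · nlinarith [haux a3 h, sq_nonneg (a1-l), sq_nonneg (a2-l)]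

lemma aux_sqle (x t : ℝ) (hx : 0 ≤ x) (ht : 0 ≤ t) (h : x^2 ≤ t^2) : x ≤ t := by
  nlinarith

lemma aux_cauchy3 (w1 w2 w3 : ℝ) : (w1+w2+w3)^2 ≤ 3*(w1^2+w2^2+w3^2) := by
  nlinarith [sq_nonneg (w1-w2), sq_nonneg (w1-w3), sq_nonneg (w2-w3)]

lemma aux_smallT (a1 a2 a3 t l d : ℝ) (h1 : 0 ≤ a1) (h2 : 0 ≤ a2) (h3 : 0 ≤ a3)
    (g1 : a1 ≤ 3*l) (g2 : a2 ≤ 3*l) (g3 : a3 ≤ 3*l)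
    (ht : 0 ≤ t) (hd : 0 ≤ d) (hl : 0 < l)
    (hS : t ^ 2 = 2/3 * (a1^2 + a2^2 + a3^2) + 2*d)
    (hD : 3 * d^2 = 2*(a1^2*a2^2 + a1^2*a3^2 + a2^2*a3^2)
        - ((a1^2)^2 + (a2^2)^2 + (a3^2)^2)) :
    (t - 2*l)^2 ≤ 500000 * ((a1-l)^2 + (a2-l)^2 + (a3-l)^2) := by
  have hW0 : 0 ≤ (a1-l)^2 + (a2-l)^2 + (a3-l)^2 := by positivity
  have hS2 := aux_hS2 a1 a2 a3 l h1 h2 h3 g1 g2 g3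
  set w1 := |a1 - l| with hw1def
  set w2 := |a2 - l| with hw2def
  set w3 := |a3 - l| with hw3def
  have hw1 : w1^2 = (a1-l)^2 := sq_abs _
  have hw2 : w2^2 = (a2-l)^2 := sq_abs _
  have hw3 : w3^2 = (a3-l)^2 := sq_abs _
  have hw1n : 0 ≤ w1 := abs_nonneg _
  have hw2n : 0 ≤ w2 := abs_nonneg _
  have hw3n : 0 ≤ w3 := abs_nonneg _
  have hw1b : w1 ≤ 2*l := abs_le.2 ⟨by linarith, by linarith⟩
  have hw2b : w2 ≤ 2*l := abs_le.2 ⟨by linarith, by linarith⟩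
  have hw3b : w3 ≤ 2*l := abs_le.2 ⟨by linarith, by linarith⟩
  have hbeta1 : |a1^2 - l^2| ≤ 4*l*w1 := by
    have e : a1^2 - l^2 = (a1-l)*(a1+l) := by ring
    rw [e, abs_mul, abs_of_nonneg (show (0:ℝ) ≤ a1 + l by linarith), ← hw1def]
    calc w1 * (a1+l) ≤ w1 * (4*l) := mul_le_mul_of_nonneg_left (by linarith) hw1n
      _ = 4*l*w1 := by ring
  have hbeta2 : |a2^2 - l^2| ≤ 4*l*w2 := by
    have e : a2^2 - l^2 = (a2-l)*(a2+l) := by ring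
    rw [e, abs_mul, abs_of_nonneg (show (0:ℝ) ≤ a2 + l by linarith), ← hw2def]
    calc w2 * (a2+l) ≤ w2 * (4*l) := mul_le_mul_of_nonneg_left (by linarith) hw2n
      _ = 4*l*w2 := by ring
  have hbeta3 : |a3^2 - l^2| ≤ 4*l*w3 := by
    have e : a3^2 - l^2 = (a3-l)*(a3+l) := by ring
    rw [e, abs_mul, abs_of_nonneg (show (0:ℝ) ≤ a3 + l by linarith), ← hw3def]
    calc w3 * (a3+l) ≤ w3 * (4*l) := mul_le_mul_of_nonneg_left (by linarith) hw3n
      _ = 4*l*w3 := by ring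
  have hE := aux_E l (a1^2-l^2) (a2^2-l^2) (a3^2-l^2) w1 w2 w3 hl
    hw1n hw2n hw3n hw1b hw2b hw3b
    (abs_le.1 hbeta1).1 (abs_le.1 hbeta1).2 (abs_le.1 hbeta2).1 (abs_le.1 hbeta2).2
    (abs_le.1 hbeta3).1 (abs_le.1 hbeta3).2
  have hEeq : 3*(d^2 - l^4) =
      2*((a1^2-l^2)*(a2^2-l^2) + (a1^2-l^2)*(a3^2-l^2) + (a2^2-l^2)*(a3^2-l^2))
      - ((a1^2-l^2)^2 + (a2^2-l^2)^2 + (a3^2-l^2)^2)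
      + 2*l^2*((a1^2-l^2) + (a2^2-l^2) + (a3^2-l^2)) := by
    linear_combination hD
  rw [← hEeq] at hE
  have hX2 : (3*(d^2-l^4))^2 ≤ (200*l^3*(w1+w2+w3))^2 :=
    sq_le_sq' (abs_le.1 hE).1 (abs_le.1 hE).2
  have hwsum : (w1+w2+w3)^2 ≤ 3*((a1-l)^2 + (a2-l)^2 + (a3-l)^2) := by
    calc (w1+w2+w3)^2 ≤ 3*(w1^2+w2^2+w3^2) := aux_cauchy3 w1 w2 w3
      _ = 3*((a1-l)^2 + (a2-l)^2 + (a3-l)^2) := by rw [hw1, hw2, hw3]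
  have hd4 : (d^2-l^4)^2 ≤ 13334 * l^6 * ((a1-l)^2 + (a2-l)^2 + (a3-l)^2) := by
    have h40 := mul_le_mul_of_nonneg_left hwsum (by positivity : (0:ℝ) ≤ 40000/9*l^6)
    linarith [hX2, h40, mul_nonneg (by positivity : (0:ℝ) ≤ l^6) hW0]
  have hdl2 : (d - l^2)^2 * l^4 ≤ 13334 * l^6 * ((a1-l)^2 + (a2-l)^2 + (a3-l)^2) := by
    linarith [hd4, mul_nonneg (sq_nonneg (d - l^2))
      (by positivity : (0:ℝ) ≤ d^2 + 2*d*l^2)]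
  have hdl : (d - l^2)^2 ≤ 13334 * l^2 * ((a1-l)^2 + (a2-l)^2 + (a3-l)^2) := by
    have hl4 : (0:ℝ) < l^4 := by positivity
    rw [← mul_le_mul_iff_left₀ hl4]
    calc (d - l^2)^2 * l^4 ≤ 13334 * l^6 * ((a1-l)^2 + (a2-l)^2 + (a3-l)^2) := hdl2
      _ = 13334 * l^2 * ((a1-l)^2 + (a2-l)^2 + (a3-l)^2) * l^4 := by ring
  have htt : (t - 2*l)^2 * (4*l^2) ≤ (t^2 - 4*l^2)^2 := by
    have hq : (0:ℝ) ≤ t^2 + 4*t*l :=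
      add_nonneg (sq_nonneg t) (by positivity)
    linarith [mul_nonneg (sq_nonneg (t - 2*l)) hq]
  have hsplit : (t^2 - 4*l^2)^2 ≤ 2*(2/3 * (a1^2+a2^2+a3^2) - 2*l^2)^2 + 8*(d - l^2)^2 := by
    have e : t^2 - 4*l^2 = (2/3 * (a1^2+a2^2+a3^2) - 2*l^2) + 2*(d - l^2) := by
      linarith [hS]
    rw [e]
    linarith [sq_nonneg ((2/3 * (a1^2+a2^2+a3^2) - 2*l^2) - 2*(d - l^2))]
  have hl2' : (0:ℝ) < 4*l^2 := by positivity
  rw [← mul_le_mul_iff_left₀ hl2']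
  calc (t - 2*l)^2 * (4*l^2) ≤ (t^2 - 4*l^2)^2 := htt
    _ ≤ 2*(2/3 * (a1^2+a2^2+a3^2) - 2*l^2)^2 + 8*(d - l^2)^2 := hsplit
    _ ≤ 2*(22 * l^2 * ((a1-l)^2 + (a2-l)^2 + (a3-l)^2))
        + 8*(13334 * l^2 * ((a1-l)^2 + (a2-l)^2 + (a3-l)^2)) := by linarith [hS2, hdl]
    _ ≤ 500000 * ((a1-l)^2 + (a2-l)^2 + (a3-l)^2) * (4*l^2) := by
        linarith [mul_nonneg (sq_nonneg l) hW0]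

lemma aux_B (a1 a2 a3 t l d : ℝ) (h1 : 0 ≤ a1) (h2 : 0 ≤ a2) (h3 : 0 ≤ a3)
    (ht : 0 ≤ t) (hd : 0 ≤ d)
    (ha1t : a1 ≤ t) (ha2t : a2 ≤ t) (ha3t : a3 ≤ t)
    (hS : t ^ 2 = 2/3 * (a1^2 + a2^2 + a3^2) + 2*d)
    (hD : 3 * d^2 = 2*(a1^2*a2^2 + a1^2*a3^2 + a2^2*a3^2)
        - ((a1^2)^2 + (a2^2)^2 + (a3^2)^2)) :
    2/3 * (a1^2+a2^2+a3^2) - 2*d ≤ 15 * ((a1-l)^2 + (a2-l)^2 + (a3-l)^2) := by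
  have hW0 : 0 ≤ (a1-l)^2 + (a2-l)^2 + (a3-l)^2 := by positivity
  rcases eq_or_lt_of_le ht with h0 | htpos
  · have e1 : a1 = 0 := le_antisymm (h0 ▸ ha1t) h1
    have e2 : a2 = 0 := le_antisymm (h0 ▸ ha2t) h2
    have e3 : a3 = 0 := le_antisymm (h0 ▸ ha3t) h3
    subst e1; subst e2; subst e3
    linarith [hd]
  · have key : (2/3 * (a1^2+a2^2+a3^2) - 2*d) * t^2 =
        8/9*((a1^2-a2^2)^2 + (a1^2-a3^2)^2 + (a2^2-a3^2)^2) := by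
      linear_combination (2/3 * (a1^2+a2^2+a3^2) - 2*d) * hS - (4/3) * hD
    have p12 := aux_pair a1 a2 t l h1 h2 ha1t ha2t
    have p13 := aux_pair a1 a3 t l h1 h3 ha1t ha3t
    have p23 := aux_pair a2 a3 t l h2 h3 ha2t ha3t
    have ht2 : (0:ℝ) < t^2 := by positivity
    rw [← mul_le_mul_iff_left₀ ht2]
    calc (2/3 * (a1^2+a2^2+a3^2) - 2*d) * t^2
        = 8/9*((a1^2-a2^2)^2 + (a1^2-a3^2)^2 + (a2^2-a3^2)^2) := key
      _ ≤ 15 * ((a1-l)^2 + (a2-l)^2 + (a3-l)^2) * t^2 := by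
          linarith [p12, p13, p23, mul_nonneg hW0 ht2.le]

lemma aux_q (x y z d : ℝ)
    (hid : x^2*(2*y^2+2*z^2-x^2) = (y^2-z^2)^2 + 3*d^2) : x^2 ≤ 2*y^2+2*z^2 := by
  nlinarith [sq_nonneg x, sq_nonneg y, sq_nonneg z, sq_nonneg d, sq_nonneg (y^2-z^2),
    mul_nonneg (mul_nonneg (sq_nonneg y) (sq_nonneg x)) (sq_nonneg x),
    mul_nonneg (add_nonneg (sq_nonneg y) (sq_nonneg z)) (sq_nonneg x)]

lemma aux_Sd (S d : ℝ) (hS0 : 0 ≤ S) (hd : 0 ≤ d) (h : 4*d^2 ≤ S^2) : 2*d ≤ S := by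
  nlinarith

lemma core (a1 a2 a3 t l d : ℝ) (h1 : 0 ≤ a1) (h2 : 0 ≤ a2) (h3 : 0 ≤ a3)
    (ht : 0 ≤ t) (hd : 0 ≤ d) (hl : 0 < l)
    (hS : t ^ 2 = 2/3 * (a1^2 + a2^2 + a3^2) + 2*d)
    (hD : 3 * d^2 = 2*(a1^2*a2^2 + a1^2*a3^2 + a2^2*a3^2)
        - ((a1^2)^2 + (a2^2)^2 + (a3^2)^2)) :
    2/3 * (a1^2+a2^2+a3^2) + 2*l^2 - 2*l*t ≤
      1000000 * ((a1-l)^2 + (a2-l)^2 + (a3-l)^2) := by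
  have hW0 : 0 ≤ (a1-l)^2 + (a2-l)^2 + (a3-l)^2 := by positivity
  have idS : (2/3*(a1^2+a2^2+a3^2))^2 - 4*d^2
      = 8/9*((a1^2-a2^2)^2+(a1^2-a3^2)^2+(a2^2-a3^2)^2) := by
    linear_combination (-4/3)*hD
  have hSd : 2*d ≤ 2/3 * (a1^2+a2^2+a3^2) :=
    aux_Sd _ d (by positivity) hd (by
      linarith [idS, sq_nonneg (a1^2-a2^2), sq_nonneg (a1^2-a3^2), sq_nonneg (a2^2-a3^2)])
  have id1 : a1^2*(2*a2^2+2*a3^2-a1^2) = (a2^2-a3^2)^2 + 3*d^2 := by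
    linear_combination -hD
  have id2 : a2^2*(2*a1^2+2*a3^2-a2^2) = (a1^2-a3^2)^2 + 3*d^2 := by
    linear_combination -hD
  have id3 : a3^2*(2*a1^2+2*a2^2-a3^2) = (a1^2-a2^2)^2 + 3*d^2 := by
    linear_combination -hD
  have hq1 : a1^2 ≤ 2*a2^2+2*a3^2 := aux_q a1 a2 a3 d id1
  have hq2 : a2^2 ≤ 2*a1^2+2*a3^2 := aux_q a2 a1 a3 d id2
  have hq3 : a3^2 ≤ 2*a1^2+2*a2^2 := aux_q a3 a1 a2 d id3
  have hb1 : a1^2 ≤ t^2 := by linarith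
  have hb2 : a2^2 ≤ t^2 := by linarith
  have hb3 : a3^2 ≤ t^2 := by linarith
  have ha1t : a1 ≤ t := aux_sqle a1 t h1 ht hb1
  have ha2t : a2 ≤ t := aux_sqle a2 t h2 ht hb2
  have ha3t : a3 ≤ t := aux_sqle a3 t h3 ht hb3
  have hB := aux_B a1 a2 a3 t l d h1 h2 h3 ht hd ha1t ha2t ha3t hS hD
  have hA : (t - 2*l)^2 ≤ 500000 * ((a1-l)^2 + (a2-l)^2 + (a3-l)^2) := by
    rcases le_or_gt (3*l) t with hcase | hcase
    · exact aux_largeT a1 a2 a3 t l h1 h2 h3 hl hcase hb1 hb2 hb3 (by linarith)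
    · exact aux_smallT a1 a2 a3 t l d h1 h2 h3
        (by linarith) (by linarith) (by linarith) ht hd hl hS hD
  nlinarith [hA, hB, hS]

lemma frob_nonneg (A : Matrix (Fin 2) (Fin 2) ℝ) : 0 ≤ frob A := Real.sqrt_nonneg _

lemma frob_sq (A : Matrix (Fin 2) (Fin 2) ℝ) :
    frob A ^ 2 = A 0 0^2 + A 0 1^2 + A 1 0^2 + A 1 1^2 := by
  rw [frob, Real.sq_sqrt (by positivity)]
  rw [Fin.sum_univ_two]
  rw [Fin.sum_univ_two, Fin.sum_univ_two]
  ring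

lemma distToSet_nonneg (F : Matrix (Fin 2) (Fin 2) ℝ) (S : Set (Matrix (Fin 2) (Fin 2) ℝ)) :
    0 ≤ distToSet F S := by
  apply Real.sInf_nonneg
  rintro x ⟨G, _, rfl⟩
  exact frob_nonneg _

lemma distToSet_le (l : ℝ) (F R : Matrix (Fin 2) (Fin 2) ℝ) (hR : R ∈ SO2) :
    distToSet F ((fun R => l • R) '' SO2) ≤ frob (F - l • R) := by
  apply csInf_le
  · exact ⟨0, by rintro x ⟨G, _, rfl⟩; exact frob_nonneg _⟩
  · exact ⟨l • R, ⟨R, hR, rfl⟩, rfl⟩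

lemma tfin (a b c d : ℝ) : (!![a,b;c,d]).transpose = !![a,c;b,d] := by
  ext i j
  fin_cases i <;> fin_cases j <;> simp [Matrix.transpose_apply]

lemma step1 (l : ℝ) (hl : 0 < l) (F : Matrix (Fin 2) (Fin 2) ℝ) :
    (distToSet F ((fun R => l • R) '' SO2)) ^ 2 ≤
      (F 0 0^2 + F 0 1^2 + F 1 0^2 + F 1 1^2) + 2*l^2
        - 2*l*Real.sqrt ((F 0 0 + F 1 1)^2 + (F 1 0 - F 0 1)^2) := by
  set p := F 0 0
  set q := F 0 1
  set r := F 1 0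
  set s := F 1 1
  have hT : (0:ℝ) ≤ (p + s)^2 + (r - q)^2 := by positivity
  set t := Real.sqrt ((p + s)^2 + (r - q)^2) with htdef
  have ht2 : t^2 = (p + s)^2 + (r - q)^2 := Real.sq_sqrt hT
  have ht0 : 0 ≤ t := Real.sqrt_nonneg _
  rcases eq_or_lt_of_le hT with h0 | hpos
  · -- degenerate case : use the identity rotation
    have htz : t = 0 := by rw [htdef, ← h0, Real.sqrt_zero]
    have hps : p + s = 0 := by nlinarith [sq_nonneg (p+s), sq_nonneg (r-q)]
    have hone : (1 : Matrix (Fin 2) (Fin 2) ℝ) ∈ SO2 := by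
      constructor <;> simp [Matrix.transpose_one]
    have hle := distToSet_le l F 1 hone
    have hfs : frob (F - l • 1) ^ 2 = (p - l)^2 + q^2 + r^2 + (s - l)^2 := by
      rw [frob_sq]
      simp [Matrix.sub_apply, Matrix.smul_apply, Matrix.one_apply]
      rfl
    have := pow_le_pow_left₀ (distToSet_nonneg F _) hle 2
    rw [hfs] at this
    rw [htz]
    nlinarith [this]
  · have htpos : 0 < t := Real.sqrt_pos.2 hpos
    set R : Matrix (Fin 2) (Fin 2) ℝ := !![(p+s)/t, (q-r)/t; (r-q)/t, (p+s)/t] with hRdef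
    have hR : R ∈ SO2 := by
      constructor
      · rw [hRdef, tfin, Matrix.mul_fin_two, Matrix.one_fin_two]
        congr 1 <;> [skip] <;> skip
        have e1 : (p+s)/t * ((p+s)/t) + (r-q)/t * ((r-q)/t) = 1 := by
          field_simp
          linarith [ht2]
        have e2 : (p+s)/t * ((q-r)/t) + (r-q)/t * ((p+s)/t) = 0 := by ring
        have e3 : (q-r)/t * ((p+s)/t) + (p+s)/t * ((r-q)/t) = 0 := by ring
        have e4 : (q-r)/t * ((q-r)/t) + (p+s)/t * ((p+s)/t) = 1 := by
          field_simp
          linarith [ht2]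
        rw [e1, e2, e3, e4]
      · rw [hRdef, Matrix.det_fin_two_of]
        field_simp
        linarith [ht2]
    have hle := distToSet_le l F R hR
    have hfs : frob (F - l • R) ^ 2 = (p - l*((p+s)/t))^2 + (q - l*((q-r)/t))^2
        + (r - l*((r-q)/t))^2 + (s - l*((p+s)/t))^2 := by
      rw [frob_sq]
      simp [Matrix.sub_apply, Matrix.smul_apply, hRdef]
      rfl
    have hval : frob (F - l • R) ^ 2 = (p^2 + q^2 + r^2 + s^2) + 2*l^2 - 2*l*t := by
      rw [hfs]
      have htne : t ≠ 0 := ne_of_gt htpos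
      have hx1 : ((p+s)/t)^2 + ((r-q)/t)^2 = 1 := by
        field_simp
        linear_combination -ht2
      have hx2 : p*((p+s)/t) + q*((q-r)/t) + r*((r-q)/t) + s*((p+s)/t) = t := by
        field_simp
        linear_combination -ht2
      linear_combination (-2*l)*hx2 + 2*l^2*hx1
    have hd := pow_le_pow_left₀ (distToSet_nonneg F _) hle 2
    rw [hval] at hd
    exact hd

theorem stmt0 :
    ∃ C : ℝ, 0 < C ∧ ∀ l : ℝ, 0 < l → ∀ F : Matrix (Fin 2) (Fin 2) ℝ, 0 ≤ F.det →
      (distToSet F ((fun R => l • R) '' SO2)) ^ 2 ≤ C * Wcell l F := by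
  refine ⟨1000000, by norm_num, ?_⟩
  intro l hl F hdet
  have hdet2 : F.det = F 0 0 * F 1 1 - F 0 1 * F 1 0 := Matrix.det_fin_two F
  set p := F 0 0 with hp
  set q := F 0 1 with hq
  set r := F 1 0 with hr
  set s := F 1 1 with hs
  set c := Real.sqrt 3 with hcdef
  have hc : c^2 = 3 := Real.sq_sqrt (by norm_num)
  have hd0 : 0 ≤ p*s - q*r := by rw [hdet2] at hdet; linarith
  set a1 := Real.sqrt (p^2 + r^2) with ha1def
  set a2 := Real.sqrt ((p/2 + q*(c/2))^2 + (r/2 + s*(c/2))^2) with ha2def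
  set a3 := Real.sqrt ((q*(c/2) - p/2)^2 + (s*(c/2) - r/2)^2) with ha3def
  have ha1s : a1^2 = p^2 + r^2 := Real.sq_sqrt (by positivity)
  have ha2s : a2^2 = (p/2 + q*(c/2))^2 + (r/2 + s*(c/2))^2 := Real.sq_sqrt (by positivity)
  have ha3s : a3^2 = (q*(c/2) - p/2)^2 + (s*(c/2) - r/2)^2 := Real.sq_sqrt (by positivity)
  set t := Real.sqrt ((p + s)^2 + (r - q)^2) with htdef
  have ht2 : t^2 = (p + s)^2 + (r - q)^2 := Real.sq_sqrt (by positivity)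
  have ht0 : 0 ≤ t := Real.sqrt_nonneg _
  -- Wcell in terms of a_i
  have hW : Wcell l F = (a1 - l)^2 + (a2 - l)^2 + (a3 - l)^2 := by
    rw [Wcell]
    have e0 : vnorm (F.mulVec (ebond 0)) = a1 := by
      rw [vnorm, ha1def]
      congr 1
      simp [ebond, Matrix.mulVec, dotProduct, Fin.sum_univ_two, hp, hr]
    have e1 : vnorm (F.mulVec (ebond 1)) = a2 := by
      rw [vnorm, ha2def]
      congr 1
      simp [ebond, Matrix.mulVec, dotProduct, Fin.sum_univ_two, hp, hq, hr, hs, hcdef]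
      ring
    have e2 : vnorm (F.mulVec (ebond 2)) = a3 := by
      rw [vnorm, ha3def]
      congr 1
      simp [ebond, Matrix.mulVec, dotProduct, Fin.sum_univ_two, hp, hq, hr, hs, hcdef]
      ring
    rw [e0, e1, e2]
  -- hypotheses of core
  have hS : t^2 = 2/3 * (a1^2 + a2^2 + a3^2) + 2*(p*s - q*r) := by
    rw [ht2, ha1s, ha2s, ha3s]
    linear_combination (-(q^2+s^2)/3) * hc
  have hD : 3 * (p*s - q*r)^2 = 2*(a1^2*a2^2 + a1^2*a3^2 + a2^2*a3^2)
      - ((a1^2)^2 + (a2^2)^2 + (a3^2)^2) := by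
    rw [ha1s, ha2s, ha3s]
    linear_combination (-(p*s - q*r)^2) * hc
  have hcore := core a1 a2 a3 t l (p*s - q*r) (Real.sqrt_nonneg _) (Real.sqrt_nonneg _)
    (Real.sqrt_nonneg _) ht0 hd0 hl hS hD
  have hstep := step1 l hl F
  rw [hW]
  calc (distToSet F ((fun R => l • R) '' SO2)) ^ 2
      ≤ (p^2 + q^2 + r^2 + s^2) + 2*l^2 - 2*l*t := hstep
    _ = 2/3 * (a1^2 + a2^2 + a3^2) + 2*l^2 - 2*l*t := by
        rw [ha1s, ha2s, ha3s]
        linear_combination (-(q^2+s^2)/3) * hc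
    _ ≤ 1000000 * ((a1 - l)^2 + (a2 - l)^2 + (a3 - l)^2) := hcore
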